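/- Let f : ℂ → ℂ be holomorphic (viewed as a map to ℂ ⊂ ℙ¹) and define β = −i·df/(1+|f|²) and α = (f df̄ − f̄ df)/(2(1+|f|²)). Then, as smooth complex-valued 1-forms, dα = β ∧ β̄ and dβ = 2 β ∧ α. -/

import Mathlib

/-- Exterior derivative of a complex-valued 1-form `ω` on `ℂ ≅ ℝ²`,
evaluated on constant vector fields: `dω(u,v) = ∂_u(ω(v)) − ∂_v(ω(u))`. -/
noncomputable def extDer (ω : ℂ → ℂ → ℂ) (p u v : ℂ) : ℂ :=
  fderiv ℝ (fun q => ω q v) p u - fderiv ℝ (fun q => ω q u) p v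

open Complex ContinuousLinearMap

noncomputable def CJ : ℂ →L[ℝ] ℂ := Complex.conjCLE.toContinuousLinearMap

lemma CJ_apply (z : ℂ) : CJ z = (starRingEnd ℂ) z := rfl

lemma conj_hasFDerivAt {g : ℂ → ℂ} {L : ℂ →L[ℝ] ℂ} {p : ℂ} (hg : HasFDerivAt g L p) :
    HasFDerivAt (fun q => (starRingEnd ℂ) (g q)) (CJ.comp L) p :=
  (CJ.hasFDerivAt).comp p hg

lemma holo_hasFDerivAt {f : ℂ → ℂ} (hf : Differentiable ℂ f) (p : ℂ) :
    HasFDerivAt f (((1 : ℂ →L[ℂ] ℂ).smulRight (deriv f p)).restrictScalars ℝ) p :=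
  ((hf p).hasDerivAt.hasFDerivAt).restrictScalars ℝ

lemma Ne_N (g : ℂ) : (1 : ℂ) + g * (starRingEnd ℂ) g ≠ 0 := by
  rw [Complex.mul_conj]
  intro h
  have := congrArg Complex.re h
  simp at this
  nlinarith [Complex.normSq_nonneg g, this]

lemma fderiv_beta_val (f : ℂ → ℂ) (hf : Differentiable ℂ f) (hf' : Differentiable ℂ (deriv f))
    (p u v : ℂ) :
    fderiv ℝ (fun q => (-Complex.I * (deriv f q * v)) *
        ((1 + f q * (starRingEnd ℂ) (f q)))⁻¹) p u =
      (-Complex.I) * v * ((deriv (deriv f) p) * u * (1 + f p * (starRingEnd ℂ) (f p))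
          - deriv f p * (deriv f p * u * (starRingEnd ℂ) (f p)
            + f p * (starRingEnd ℂ) (deriv f p) * (starRingEnd ℂ) u))
        / (1 + f p * (starRingEnd ℂ) (f p)) ^ 2 := by
  have h1 := holo_hasFDerivAt hf p
  have hB := holo_hasFDerivAt hf' p
  have h3 := hB.mul_const v
  have h4 := h3.const_mul (-Complex.I)
  have h6 := conj_hasFDerivAt h1
  have h10 := h1.mul h6
  have h11 := h10.const_add 1
  have hNe : (1 : ℂ) + f p * (starRingEnd ℂ) (f p) ≠ 0 := Ne_N (f p)
  have hinv := (hasFDerivAt_inv' (𝕜 := ℝ) hNe).comp p h11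
  have hfull : HasFDerivAt (fun q => (-Complex.I * (deriv f q * v)) *
        ((1 + f q * (starRingEnd ℂ) (f q)))⁻¹) _ p := h4.mul hinv
  rw [hfull.fderiv]
  simp only [ContinuousLinearMap.add_apply, ContinuousLinearMap.smul_apply,
    ContinuousLinearMap.comp_apply, ContinuousLinearMap.coe_restrictScalars',
    ContinuousLinearMap.smulRight_apply, ContinuousLinearMap.one_apply,
    ContinuousLinearMap.neg_apply, ContinuousLinearMap.mulLeftRight_apply,
    CJ_apply, smul_eq_mul, map_mul]
  field_simp
  ring

lemma fderiv_alpha_val (f : ℂ → ℂ) (hf : Differentiable ℂ f) (hf' : Differentiable ℂ (deriv f))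
    (p u v : ℂ) :
    fderiv ℝ (fun q => (f q * (starRingEnd ℂ) (deriv f q * v)
        - (starRingEnd ℂ) (f q) * (deriv f q * v)) *
        (2 * (1 + f q * (starRingEnd ℂ) (f q)))⁻¹) p u =
      ((deriv f p * u * (starRingEnd ℂ) (deriv f p) * (starRingEnd ℂ) v
          + f p * (starRingEnd ℂ) (deriv (deriv f) p) * (starRingEnd ℂ) u * (starRingEnd ℂ) v
          - (starRingEnd ℂ) (deriv f p) * (starRingEnd ℂ) u * deriv f p * v
          - (starRingEnd ℂ) (f p) * deriv (deriv f) p * u * v)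
          * (1 + f p * (starRingEnd ℂ) (f p))
        - (f p * (starRingEnd ℂ) (deriv f p) * (starRingEnd ℂ) v
            - (starRingEnd ℂ) (f p) * deriv f p * v)
          * (deriv f p * u * (starRingEnd ℂ) (f p)
            + f p * (starRingEnd ℂ) (deriv f p) * (starRingEnd ℂ) u))
        / (2 * (1 + f p * (starRingEnd ℂ) (f p)) ^ 2) := by
  have h1 := holo_hasFDerivAt hf p
  have hB := holo_hasFDerivAt hf' p
  have h3 := hB.mul_const v
  have hcb := conj_hasFDerivAt h3
  have h5 := h1.mul hcb
  have h6 := conj_hasFDerivAt h1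
  have h7 := h6.mul h3
  have h8 := h5.sub h7
  have h10 := h1.mul h6
  have h11 := h10.const_add 1
  have h12 := h11.const_mul (2 : ℂ)
  have hNe : (2 : ℂ) * (1 + f p * (starRingEnd ℂ) (f p)) ≠ 0 :=
    mul_ne_zero two_ne_zero (Ne_N (f p))
  have hinv := (hasFDerivAt_inv' (𝕜 := ℝ) hNe).comp p h12
  have hfull : HasFDerivAt (fun q => (f q * (starRingEnd ℂ) (deriv f q * v)
        - (starRingEnd ℂ) (f q) * (deriv f q * v)) *
        (2 * (1 + f q * (starRingEnd ℂ) (f q)))⁻¹) _ p := h8.mul hinv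
  rw [hfull.fderiv]
  simp only [ContinuousLinearMap.add_apply, ContinuousLinearMap.sub_apply,
    ContinuousLinearMap.smul_apply,
    ContinuousLinearMap.comp_apply, ContinuousLinearMap.coe_restrictScalars',
    ContinuousLinearMap.smulRight_apply, ContinuousLinearMap.one_apply,
    ContinuousLinearMap.neg_apply, ContinuousLinearMap.mulLeftRight_apply,
    CJ_apply, smul_eq_mul, map_mul, Pi.sub_apply, Pi.mul_apply]
  have hN : (1 : ℂ) + f p * (starRingEnd ℂ) (f p) ≠ 0 := Ne_N (f p)
  field_simp
  ring

theorem stmt_17 (f : ℂ → ℂ) (hf : Differentiable ℂ f)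
    (α β : ℂ → ℂ → ℂ)
    (hα : α = fun p u =>
      (f p * (starRingEnd ℂ) (deriv f p * u)
        - (starRingEnd ℂ) (f p) * (deriv f p * u)) /
          (2 * (1 + ‖f p‖ ^ 2)))
    (hβ : β = fun p u =>
      (-Complex.I * (deriv f p * u)) / (1 + ‖f p‖ ^ 2)) :
    ∀ p u v : ℂ,
      extDer α p u v =
        β p u * (starRingEnd ℂ) (β p v) - β p v * (starRingEnd ℂ) (β p u) ∧
      extDer β p u v = 2 * (β p u * α p v - β p v * α p u) := by
  have hf' : Differentiable ℂ (deriv f) := by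
    have h2 : ContDiff ℂ 2 f := hf.contDiff
    have := (contDiff_succ_iff_deriv (n := 1)).mp (by exact_mod_cast h2)
    exact this.2.2.differentiable one_ne_zero
  subst hα hβ
  intro p u v
  have habs : ∀ z : ℂ, ((‖z‖ : ℂ)) ^ 2 = z * (starRingEnd ℂ) z := fun z => by
    rw [← Complex.ofReal_pow, Complex.sq_norm, Complex.mul_conj]
  have hN : (1 : ℂ) + f p * (starRingEnd ℂ) (f p) ≠ 0 := Ne_N (f p)
  simp only [extDer, habs, div_eq_mul_inv]
  rw [fderiv_alpha_val f hf hf' p u v, fderiv_alpha_val f hf hf' p v u,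
    fderiv_beta_val f hf hf' p u v, fderiv_beta_val f hf hf' p v u]
  constructor
  · simp only [map_mul, map_add, map_one, map_neg, map_inv₀, Complex.conj_I,
      Complex.conj_conj, div_eq_mul_inv, mul_comm ((starRingEnd ℂ) (f p)) (f p)]
    field_simp [hN]
    ring_nf
    try simp only [Complex.I_sq]
    try ring
  · simp only [map_mul, map_add, map_one, map_neg, map_inv₀, Complex.conj_I,
      Complex.conj_conj, div_eq_mul_inv, mul_comm ((starRingEnd ℂ) (f p)) (f p)]
    field_simp [hN]
    ring_nf
    try simp only [Complex.I_sq]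
    try ring
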